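/- Let γ ≥ 1 and P⁻ > 0. For u > −P⁻ and h ≠ 0 with P⁻ + h > 0, define f̃(u, h) = (P⁻ + u)^γ + (P⁻(P⁻ + h)/(P⁻ + u))·(((P⁻ + h)^γ − (P⁻)^γ)/h) − (((P⁻ + h)^{γ+1} − (P⁻)^{γ+1})/h). Then f̃ together with its first and second partial derivatives extends continuously to (u, h) = (0, 0), and the extended values satisfy f̃(0,0) = 0, ∂f̃/∂u(0,0) = 0, ∂f̃/∂h(0,0) = 0, ∂²f̃/∂u∂h(0,0) = −(γ(γ+1)/2)(P⁻)^{γ−2}, and ∂²f̃/∂u²(0,0) = γ(γ+1)(P⁻)^{γ−2}. -/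

import Mathlib

open Filter Topology


lemma arpow (p : ℝ) {x : ℝ} (hx : 0 < x) : AnalyticAt ℝ (fun y : ℝ => y ^ p) x := by
  have hc : AnalyticAt ℂ (fun z : ℂ => z ^ (p : ℂ)) (x : ℂ) :=
    analyticAt_id.cpow analyticAt_const (Complex.ofReal_mem_slitPlane.2 hx)
  have h2 : AnalyticAt ℝ (fun y : ℝ => (((y : ℂ) ^ (p : ℂ)).re)) x :=
    (Complex.reCLM.analyticAt _).comp
      ((hc.restrictScalars).comp (Complex.ofRealCLM.analyticAt _))
  refine h2.congr ?_
  filter_upwards [eventually_gt_nhds hx] with y hy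
  rw [← Complex.ofReal_cpow hy.le, Complex.ofReal_re]

lemma adslope {f : ℝ → ℝ} {z : ℝ} (hf : AnalyticAt ℝ f z) : AnalyticAt ℝ (dslope f z) z := by
  obtain ⟨p, hp⟩ := hf
  exact ⟨p.fslope, hp.has_fpower_series_dslope_fslope⟩

lemma dslope_deriv {f : ℝ → ℝ} (hf : AnalyticAt ℝ f 0) :
    deriv (deriv f) 0 = 2 * deriv (dslope f 0) 0 := by
  set A := dslope f 0 with hA_def
  have hA : AnalyticAt ℝ A 0 := by
    obtain ⟨p, hp⟩ := hf
    exact ⟨p.fslope, hp.has_fpower_series_dslope_fslope⟩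
  have hfeq : ∀ h : ℝ, f h = f 0 + h * A h := by
    intro h
    have := sub_smul_dslope f 0 h
    simp only [sub_zero, smul_eq_mul] at this
    linarith [this]
  have hev : deriv f =ᶠ[𝓝 (0:ℝ)] fun h => A h + h * deriv A h := by
    filter_upwards [hA.eventually_analyticAt] with h hAh
    have h1 : HasDerivAt (fun y => f 0 + y * A y)
        (0 + (1 * A h + h * deriv A h)) h :=
      (hasDerivAt_const h (f 0)).add ((hasDerivAt_id h).mul hAh.differentiableAt.hasDerivAt)
    have h2 : HasDerivAt f (0 + (1 * A h + h * deriv A h)) h := by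
      refine h1.congr_of_eventuallyEq ?_
      filter_upwards with y using (hfeq y)
    rw [h2.deriv]; ring
  have := hev.deriv_eq (x := 0)
  rw [this]
  have hA' : AnalyticAt ℝ (deriv A) 0 := by
    have : AnalyticAt ℝ (fun x => fderiv ℝ A x 1) 0 :=
      ((ContinuousLinearMap.apply ℝ ℝ (1:ℝ)).analyticAt _).comp hA.fderiv
    exact this
  have h3 : HasDerivAt (fun h : ℝ => A h + h * deriv A h)
      (deriv A 0 + (1 * deriv A 0 + 0 * deriv (deriv A) 0)) 0 :=
    (hA.differentiableAt.hasDerivAt).add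
      ((hasDerivAt_id 0).mul hA'.differentiableAt.hasDerivAt)
  rw [h3.deriv]; ring

noncomputable def Aux (Pm p : ℝ) : ℝ → ℝ := dslope (fun h : ℝ => (Pm + h) ^ p) 0

noncomputable def Ftil (Pm γ : ℝ) : ℝ × ℝ → ℝ := fun q =>
  (Pm + q.1) ^ γ + Pm * (Pm + q.2) / (Pm + q.1) * Aux Pm γ q.2 - Aux Pm (γ + 1) q.2

lemma hd_rpow (Pm p u : ℝ) (hu : 0 < Pm + u) :
    HasDerivAt (fun y : ℝ => (Pm + y) ^ p) (p * (Pm + u) ^ (p - 1)) u := by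
  have h1 : HasDerivAt (fun y : ℝ => Pm + y) 1 u := (hasDerivAt_id u).const_add Pm
  have h2 := Real.hasDerivAt_rpow_const (x := Pm + u) (p := p) (Or.inl hu.ne')
  exact (h2.comp u h1).congr_deriv (by ring)

lemma aux_analytic (Pm p : ℝ) (hPm : 0 < Pm) : AnalyticAt ℝ (Aux Pm p) 0 := by
  have hφ : AnalyticAt ℝ (fun h : ℝ => (Pm + h) ^ p) 0 := by
    have := (arpow p (show (0:ℝ) < Pm + 0 by linarith)).comp
      (analyticAt_const.add analyticAt_id : AnalyticAt ℝ (fun h : ℝ => Pm + h) 0)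
    exact this
  exact adslope hφ

lemma aux_val (Pm p : ℝ) (hPm : 0 < Pm) : Aux Pm p 0 = p * Pm ^ (p - 1) := by
  rw [Aux, dslope_same]
  have := (hd_rpow Pm p 0 (by linarith)).deriv
  simpa using this

lemma aux_deriv (Pm p : ℝ) (hPm : 0 < Pm) :
    deriv (Aux Pm p) 0 = p * (p - 1) * Pm ^ (p - 2) / 2 := by
  have hφ : AnalyticAt ℝ (fun h : ℝ => (Pm + h) ^ p) 0 := by
    exact (arpow p (show (0:ℝ) < Pm + 0 by linarith)).comp
      (analyticAt_const.add analyticAt_id)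
  have h2 := dslope_deriv hφ
  have hev : ∀ᶠ u : ℝ in 𝓝 0, 0 < Pm + u := by
    filter_upwards [Metric.ball_mem_nhds (0:ℝ) hPm] with u hu
    rw [Metric.mem_ball, dist_zero_right] at hu
    have := abs_lt.1 hu
    linarith [this.1]
  have hdd : deriv (fun h : ℝ => (Pm + h) ^ p) =ᶠ[𝓝 (0:ℝ)]
      fun u => p * (Pm + u) ^ (p - 1) := by
    filter_upwards [hev] with u hu using (hd_rpow Pm p u hu).deriv
  have h3 : deriv (deriv (fun h : ℝ => (Pm + h) ^ p)) 0 = p * ((p-1) * (Pm + 0) ^ (p-1-1)) := by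
    rw [hdd.deriv_eq]
    exact (((hd_rpow Pm (p-1) 0 (by linarith))).const_mul p).deriv
  rw [show Aux Pm p = dslope (fun h : ℝ => (Pm + h) ^ p) 0 from rfl]
  rw [h3] at h2
  have : (Pm + 0 : ℝ) ^ (p - 1 - 1) = Pm ^ (p - 2) := by
    rw [add_zero, show p - 1 - 1 = p - 2 by ring]
  rw [this] at h2
  linarith


/-- the shifted profile nonlinearity `f̃(u,h)` extends, together with its first
and second partial derivatives, continuously to `(u,h) = (0,0)` (i.e. it has a `C²` extension
at the origin), with the stated values of the extension and of its partial derivatives. -/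
theorem stmt_3 (γ Pm : ℝ) (hγ : 1 ≤ γ) (hPm : 0 < Pm) :
    ∃ F : ℝ × ℝ → ℝ,
      (∀ u h : ℝ, -Pm < u → h ≠ 0 → 0 < Pm + h →
        F (u, h) = (Pm + u) ^ γ
          + Pm * (Pm + h) / (Pm + u) * (((Pm + h) ^ γ - Pm ^ γ) / h)
          - ((Pm + h) ^ (γ + 1) - Pm ^ (γ + 1)) / h) ∧
      ContDiffAt ℝ 2 F (0, 0) ∧
      F (0, 0) = 0 ∧
      deriv (fun u => F (u, 0)) 0 = 0 ∧
      deriv (fun h => F (0, h)) 0 = 0 ∧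
      deriv (fun h => deriv (fun u => F (u, h)) 0) 0 = -(γ * (γ + 1) / 2) * Pm ^ (γ - 2) ∧
      deriv (deriv (fun u => F (u, 0))) 0 = γ * (γ + 1) * Pm ^ (γ - 2) := by
  have hPm' : Pm ≠ 0 := hPm.ne'
  have hPm0 : (0:ℝ) < Pm + 0 := by linarith
  have hA : AnalyticAt ℝ (Aux Pm γ) 0 := aux_analytic Pm γ hPm
  have hB : AnalyticAt ℝ (Aux Pm (γ+1)) 0 := aux_analytic Pm (γ+1) hPm
  have hA0 : Aux Pm γ 0 = γ * Pm ^ (γ - 1) := aux_val Pm γ hPm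
  have hB0 : Aux Pm (γ+1) 0 = (γ+1) * Pm ^ γ := by
    rw [aux_val Pm (γ+1) hPm, add_sub_cancel_right]
  have hA1 : deriv (Aux Pm γ) 0 = γ * (γ - 1) * Pm ^ (γ - 2) / 2 := aux_deriv Pm γ hPm
  have hB1 : deriv (Aux Pm (γ+1)) 0 = (γ+1) * γ * Pm ^ (γ - 1) / 2 := by
    rw [aux_deriv Pm (γ+1) hPm, add_sub_cancel_right,
      show γ + 1 - 2 = γ - 1 by ring]
  have e1 : Pm ^ (γ - 1) = Pm * Pm ^ (γ - 2) := by
    rw [show γ - 1 = 1 + (γ - 2) by ring, Real.rpow_add hPm, Real.rpow_one]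
  have e2 : Pm ^ γ = Pm * Pm ^ (γ - 1) := by
    have h := Real.rpow_add hPm 1 (γ - 1)
    rw [show (1:ℝ) + (γ - 1) = γ by ring, Real.rpow_one] at h
    exact h
  have hev : ∀ᶠ u : ℝ in 𝓝 0, 0 < Pm + u := by
    filter_upwards [Metric.ball_mem_nhds (0:ℝ) hPm] with u hu
    rw [Metric.mem_ball, dist_zero_right] at hu
    have := abs_lt.1 hu
    linarith [this.1]
  have hA' : HasDerivAt (Aux Pm γ) (deriv (Aux Pm γ) 0) 0 :=
    hA.differentiableAt.hasDerivAt
  have hB' : HasDerivAt (Aux Pm (γ+1)) (deriv (Aux Pm (γ+1)) 0) 0 :=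
    hB.differentiableAt.hasDerivAt
  -- derivative in u of F (·, h), for any h, at points u with 0 < Pm + u
  have keyu : ∀ h u : ℝ, 0 < Pm + u → HasDerivAt (fun u => Ftil Pm γ (u, h))
      (γ * (Pm + u) ^ (γ - 1) - Pm * (Pm + h) * Aux Pm γ h / (Pm + u) ^ 2) u := by
    intro h u hu
    have h1 := hd_rpow Pm γ u hu
    have h2 : HasDerivAt (fun u : ℝ => Pm * (Pm + h) / (Pm + u))
        ((0 * (Pm + u) - Pm * (Pm + h) * 1) / (Pm + u) ^ 2) u :=
      (hasDerivAt_const u (Pm * (Pm + h))).div ((hasDerivAt_id u).const_add Pm) hu.ne'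
    have h3 := (h1.add (h2.mul_const (Aux Pm γ h))).sub_const (Aux Pm (γ+1) h)
    exact h3.congr_deriv (by ring)
  refine ⟨Ftil Pm γ, ?_, ?_, ?_, ?_, ?_, ?_, ?_⟩
  · -- formula
    intro u h hu hh hph
    have hAform : ∀ p : ℝ, Aux Pm p h = ((Pm + h) ^ p - Pm ^ p) / h := by
      intro p
      rw [Aux, dslope_of_ne _ hh, slope_def_field]
      simp
    rw [Ftil, hAform, hAform]
  · -- C²
    have hfst : AnalyticAt ℝ (fun q : ℝ × ℝ => Pm + q.1) ((0:ℝ), (0:ℝ)) :=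
      analyticAt_const.add analyticAt_fst
    have hsnd : AnalyticAt ℝ (fun q : ℝ × ℝ => Pm + q.2) ((0:ℝ), (0:ℝ)) :=
      analyticAt_const.add analyticAt_snd
    have hsnd0 : AnalyticAt ℝ (fun q : ℝ × ℝ => q.2) ((0:ℝ), (0:ℝ)) := analyticAt_snd
    have c1 : AnalyticAt ℝ (fun q : ℝ × ℝ => (Pm + q.1) ^ γ) ((0:ℝ), (0:ℝ)) := by
      exact AnalyticAt.comp (g := fun y : ℝ => y ^ γ) (f := fun q : ℝ × ℝ => Pm + q.1)
        (arpow γ hPm0) hfst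
    have c2 : AnalyticAt ℝ (fun q : ℝ × ℝ => Aux Pm γ q.2) ((0:ℝ), (0:ℝ)) := by
      exact AnalyticAt.comp (g := Aux Pm γ) (f := fun q : ℝ × ℝ => q.2) hA hsnd0
    have c3 : AnalyticAt ℝ (fun q : ℝ × ℝ => Aux Pm (γ+1) q.2) ((0:ℝ), (0:ℝ)) := by
      exact AnalyticAt.comp (g := Aux Pm (γ+1)) (f := fun q : ℝ × ℝ => q.2) hB hsnd0
    have hF : AnalyticAt ℝ (Ftil Pm γ) (0, 0) := by
      refine AnalyticAt.sub (AnalyticAt.add c1 ?_) c3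
      exact ((analyticAt_const.mul hsnd).div hfst (by simpa using hPm')).mul c2
    exact hF.contDiffAt
  · -- value
    show (Pm + 0) ^ γ + Pm * (Pm + 0) / (Pm + 0) * Aux Pm γ 0 - Aux Pm (γ+1) 0 = 0
    rw [hA0, hB0, add_zero, e2, e1]
    field_simp
    ring
  · -- ∂u at (0,0)
    rw [(keyu 0 0 hPm0).deriv, hA0, add_zero]
    field_simp
    ring
  · -- ∂h at (0,0)
    have h2 : HasDerivAt (fun h : ℝ => Pm * (Pm + h) / (Pm + 0))
        (Pm * 1 / (Pm + 0)) 0 :=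
      (((hasDerivAt_id 0).const_add Pm).const_mul Pm).div_const (Pm + 0)
    have h3 := ((hasDerivAt_const (0:ℝ) ((Pm + 0) ^ γ)).add (h2.mul hA')).sub hB'
    have hfn : (fun h => Ftil Pm γ (0, h)) =
        fun h => (Pm + 0) ^ γ + Pm * (Pm + h) / (Pm + 0) * Aux Pm γ h - Aux Pm (γ+1) h := rfl
    rw [hfn, HasDerivAt.deriv (f := fun h => (Pm + 0) ^ γ + Pm * (Pm + h) / (Pm + 0) * Aux Pm γ h - Aux Pm (γ+1) h) h3, hA0, hA1, hB1, add_zero, e1]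
    field_simp
    ring
  · -- mixed partial
    have hfun : (fun h => deriv (fun u => Ftil Pm γ (u, h)) 0) =
        fun h => γ * (Pm + 0) ^ (γ - 1) - Pm * (Pm + h) * Aux Pm γ h / (Pm + 0) ^ 2 :=
      funext fun h => (keyu h 0 hPm0).deriv
    rw [hfun]
    have h2 : HasDerivAt (fun h : ℝ => Pm * (Pm + h)) (Pm * 1) 0 :=
      ((hasDerivAt_id 0).const_add Pm).const_mul Pm
    have h3 := (hasDerivAt_const (0:ℝ) (γ * (Pm + 0) ^ (γ - 1))).sub
      ((h2.mul hA').div_const ((Pm + 0) ^ 2))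
    rw [HasDerivAt.deriv (f := fun h => γ * (Pm + 0) ^ (γ - 1) - Pm * (Pm + h) * Aux Pm γ h / (Pm + 0) ^ 2) h3, hA0, hA1, add_zero, e1]
    field_simp
    ring
  · -- second derivative in u
    have hder : deriv (fun u => Ftil Pm γ (u, 0)) =ᶠ[𝓝 (0:ℝ)]
        fun u => γ * (Pm + u) ^ (γ - 1) - Pm * (Pm + 0) * Aux Pm γ 0 / (Pm + u) ^ 2 := by
      filter_upwards [hev] with u hu using (keyu 0 u hu).deriv
    rw [hder.deriv_eq]
    have h1 := (hd_rpow Pm (γ - 1) 0 hPm0).const_mul γ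
    have hpow : HasDerivAt (fun u : ℝ => (Pm + u) ^ 2) (2 * (Pm + 0) ^ 1 * 1) 0 := by
      exact (((hasDerivAt_id (0:ℝ)).const_add Pm).pow 2).congr_deriv (by norm_num)
    have h2 := (hasDerivAt_const (0:ℝ) (Pm * (Pm + 0) * Aux Pm γ 0)).div hpow
      (by positivity)
    have h3 := h1.sub h2
    rw [HasDerivAt.deriv (f := fun u => γ * (Pm + u) ^ (γ - 1) - Pm * (Pm + 0) * Aux Pm γ 0 / (Pm + u) ^ 2) h3, hA0, add_zero, show γ - 1 - 1 = γ - 2 by ring, e1]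
    field_simp
    ring
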